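/- Let Ω be a compact convex subset of ℝ^d of affine dimension d that is not a simplex. Then there exists a point ω ∈ Ω admitting two distinct representations ω = ∑_{i=1}^{N₀} p⁰ᵢ μ⁰ᵢ = ∑_{j=1}^{N₁} p¹ⱼ μ¹ⱼ as convex combinations (with all weights strictly positive) of extreme points, where the sets {μ⁰ᵢ} and {μ¹ⱼ} are disjoint and N₀ + N₁ ≤ d + 2. -/

import Mathlib

open Module Finset

/-- Reindexing a sum over a finset by `Finset.equivFin`. -/
lemma sum_equivFin_aux {α : Type*} {M : Type*} [AddCommMonoid M] (K : Finset α) (f : α → M) :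
    ∑ k : Fin K.card, f ↑(K.equivFin.symm k) = ∑ e ∈ K, f e := by
  rw [Equiv.sum_comp K.equivFin.symm (fun a : {y // y ∈ K} => f ↑a)]
  exact Finset.sum_coe_sort K f

/-- If a compact convex set with full affine span is not a simplex, it has at least
`d + 2` distinct extreme points. -/
lemma exists_card_extremePoints_aux
    {d : ℕ} (Ω : Set (Fin d → ℝ)) (hcomp : IsCompact Ω) (hconv : Convex ℝ Ω)
    (hfull : affineSpan ℝ Ω = ⊤)
    (hns : ¬∃ s : Finset (Fin d → ℝ), AffineIndependent ℝ ((↑) : s → (Fin d → ℝ)) ∧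
      Ω = convexHull ℝ (s : Set (Fin d → ℝ))) :
    ∃ t : Finset (Fin d → ℝ), ↑t ⊆ Ω.extremePoints ℝ ∧ t.card = d + 2 := by
  classical
  by_contra h
  push_neg at h
  -- Then the extreme point set is finite with at most d+1 elements.
  have hEfin : (Ω.extremePoints ℝ).Finite := by
    by_contra hinf
    obtain ⟨t, ht, hc⟩ := (show (Ω.extremePoints ℝ).Infinite from hinf).exists_subset_card_eq (d + 2)
    exact h t ht hc
  set t : Finset (Fin d → ℝ) := hEfin.toFinset with htdef
  have htsub : ↑t ⊆ Ω.extremePoints ℝ := by simp [htdef]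
  have hcard : t.card ≤ d + 1 := by
    by_contra hc
    push_neg at hc
    obtain ⟨u, hu, huc⟩ := Finset.exists_subset_card_eq (Nat.succ_le_of_lt hc)
    exact h u ((Finset.coe_subset.mpr hu).trans htsub) huc
  -- Krein–Milman: Ω is the convex hull of its extreme points.
  have hΩeq : Ω = convexHull ℝ (↑t : Set (Fin d → ℝ)) := by
    have h1 := closure_convexHull_extremePoints hcomp hconv
    have h2 : IsClosed (convexHull ℝ (Ω.extremePoints ℝ)) :=
      hEfin.isClosed_convexHull ℝ
    rw [h2.closure_eq] at h1
    rw [← h1, htdef, Set.Finite.coe_toFinset]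
  -- The affine span of t is everything.
  have hspan : affineSpan ℝ (↑t : Set (Fin d → ℝ)) = ⊤ := by
    rw [hΩeq, affineSpan_convexHull] at hfull
    exact hfull
  -- t is nonempty.
  have hne : t.Nonempty := by
    rcases t.eq_empty_or_nonempty with h0 | h0
    · exfalso
      rw [h0] at hspan
      simp only [Finset.coe_empty, AffineSubspace.span_empty] at hspan
      have : (0 : Fin d → ℝ) ∈ (⊥ : AffineSubspace ℝ (Fin d → ℝ)) := by
        rw [hspan]; trivial
      exact this
    · exact h0
  obtain ⟨n, hn⟩ : ∃ n, t.card = n + 1 :=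
    ⟨t.card - 1, (Nat.succ_pred_eq_of_pos (Finset.card_pos.mpr hne)).symm⟩
  have hcardn : Fintype.card t = n + 1 := by rw [Fintype.card_coe]; exact hn
  have hrange : Set.range ((↑) : t → (Fin d → ℝ)) = (↑t : Set (Fin d → ℝ)) :=
    Subtype.range_coe
  -- the vector span has dimension d
  have hfr : finrank ℝ (vectorSpan ℝ (Set.range ((↑) : t → (Fin d → ℝ)))) = d := by
    rw [hrange, ← direction_affineSpan, hspan, AffineSubspace.direction_top,
      finrank_top]
    simp
  have hle : finrank ℝ (vectorSpan ℝ (Set.range ((↑) : t → (Fin d → ℝ)))) ≤ n :=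
    finrank_vectorSpan_range_le ℝ _ hcardn
  have hnd : n = d := le_antisymm (by omega) (hfr ▸ hle)
  have hind : AffineIndependent ℝ ((↑) : t → (Fin d → ℝ)) := by
    rw [affineIndependent_iff_finrank_vectorSpan_eq ℝ _ hcardn, hfr, hnd]
  exact hns ⟨t, hind, hΩeq⟩

/-- A compact convex subset `Ω ⊆ ℝ^d` of full affine dimension `d` that is
not a simplex has a point `ω` with two distinct convex decompositions (all weights
strictly positive) into disjoint finite sets of extreme points, with at most `d + 2`
extreme points in total. -/
theorem nonsimplex_has_two_disjoint_decompositions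
    {d : ℕ} (Ω : Set (Fin d → ℝ)) (hcomp : IsCompact Ω) (hconv : Convex ℝ Ω)
    (hfull : affineSpan ℝ Ω = ⊤)
    (hns : ¬∃ s : Finset (Fin d → ℝ), AffineIndependent ℝ ((↑) : s → (Fin d → ℝ)) ∧
      Ω = convexHull ℝ (s : Set (Fin d → ℝ))) :
    ∃ ω ∈ Ω, ∃ (N₀ N₁ : ℕ) (p₀ : Fin N₀ → ℝ) (p₁ : Fin N₁ → ℝ)
      (μ₀ : Fin N₀ → (Fin d → ℝ)) (μ₁ : Fin N₁ → (Fin d → ℝ)),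
      (∀ i, 0 < p₀ i) ∧ (∀ j, 0 < p₁ j) ∧
      (∑ i, p₀ i = 1) ∧ (∑ j, p₁ j = 1) ∧
      (∀ i, μ₀ i ∈ Set.extremePoints ℝ Ω) ∧ (∀ j, μ₁ j ∈ Set.extremePoints ℝ Ω) ∧
      Function.Injective μ₀ ∧ Function.Injective μ₁ ∧
      (∀ i j, μ₀ i ≠ μ₁ j) ∧
      (∑ i, p₀ i • μ₀ i = ω) ∧ (∑ j, p₁ j • μ₁ j = ω) ∧
      N₀ + N₁ ≤ d + 2 := by
  classical
  obtain ⟨t, htsub, htcard⟩ := exists_card_extremePoints_aux Ω hcomp hconv hfull hns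
  -- the family of points of t
  set x : t → (Fin d → ℝ) := (↑) with hxdef
  have hxinj : Function.Injective x := Subtype.coe_injective
  have hcardt : Fintype.card t = d + 2 := by rw [Fintype.card_coe]; exact htcard
  -- x is affinely dependent
  have hdep : ¬ AffineIndependent ℝ x := by
    rw [← finrank_vectorSpan_le_iff_not_affineIndependent ℝ x hcardt]
    exact (Submodule.finrank_le _).trans (by simp)
  rw [affineIndependent_iff] at hdep
  push_neg at hdep
  obtain ⟨s, w, hw0, hwx, e₀, he₀s, he₀⟩ := hdep
  -- positive and negative parts
  set I : Finset t := s.filter (fun e => 0 < w e) with hIdef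
  set J : Finset t := s.filter (fun e => w e < 0) with hJdef
  have hIJdisj : Disjoint I J := by
    rw [Finset.disjoint_left]
    intro a haI haJ
    rw [hIdef, Finset.mem_filter] at haI
    rw [hJdef, Finset.mem_filter] at haJ
    exact absurd haI.2 (not_lt.mpr haJ.2.le)
  have hIJsub : I ∪ J ⊆ s := by
    apply Finset.union_subset <;> exact Finset.filter_subset _ _
  have hzero : ∀ e ∈ s, e ∉ I ∪ J → w e = 0 := by
    intro e hes heIJ
    rw [Finset.mem_union, hIdef, hJdef, Finset.mem_filter, Finset.mem_filter] at heIJ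
    push_neg at heIJ
    exact le_antisymm (heIJ.1 hes) (heIJ.2 hes)
  have hsum : ∑ e ∈ I, w e + ∑ e ∈ J, w e = 0 := by
    rw [← Finset.sum_union hIJdisj]
    rw [Finset.sum_subset hIJsub (fun e hes heIJ => hzero e hes heIJ)]
    exact hw0
  have hvec : ∑ e ∈ I, w e • x e + ∑ e ∈ J, w e • x e = 0 := by
    rw [← Finset.sum_union hIJdisj]
    rw [Finset.sum_subset hIJsub (fun e hes heIJ => by rw [hzero e hes heIJ, zero_smul])]
    exact hwx
  set S : ℝ := ∑ e ∈ I, w e with hSdef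
  have hIpos : ∀ e ∈ I, 0 < w e := fun e he => (Finset.mem_filter.mp he).2
  have hJneg : ∀ e ∈ J, w e < 0 := fun e he => (Finset.mem_filter.mp he).2
  have hSpos : 0 < S := by
    rcases lt_or_gt_of_ne he₀ with hneg | hpos
    · -- w e₀ < 0, so ∑_J w < 0, so S = -∑_J w > 0
      have he₀J : e₀ ∈ J := Finset.mem_filter.mpr ⟨he₀s, hneg⟩
      have h1 : -w e₀ ≤ ∑ e ∈ J, -w e :=
        Finset.single_le_sum (f := fun e => -w e)
          (fun e he => (neg_nonneg.mpr (hJneg e he).le)) he₀J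
      have h2 : ∑ e ∈ J, -w e = -∑ e ∈ J, w e := by rw [Finset.sum_neg_distrib]
      rw [h2] at h1
      have : 0 < -∑ e ∈ J, w e := lt_of_lt_of_le (by linarith) h1
      linarith
    · have he₀I : e₀ ∈ I := Finset.mem_filter.mpr ⟨he₀s, hpos⟩
      have : w e₀ ≤ S := Finset.single_le_sum (fun e he => (hIpos e he).le) he₀I
      linarith
  have hJsum : ∑ e ∈ J, (-w e) = S := by
    rw [Finset.sum_neg_distrib]
    linarith
  -- the common point
  set ω : Fin d → ℝ := ∑ e ∈ I, (w e / S) • x e with hωdef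
  have hωmem : ω ∈ Ω := by
    apply hconv.sum_mem
    · exact fun e he => div_nonneg (hIpos e he).le hSpos.le
    · rw [← Finset.sum_div, ← hSdef, div_self hSpos.ne']
    · intro e he
      exact extremePoints_subset (htsub e.2)
  have hconvsmul : ∀ (K : Finset t) (v : t → ℝ),
      ∑ e ∈ K, (v e / S) • x e = S⁻¹ • ∑ e ∈ K, v e • x e := by
    intro K v
    rw [Finset.smul_sum]
    refine Finset.sum_congr rfl fun e _ => ?_
    rw [smul_smul, div_eq_inv_mul]
  have hkey : ∑ e ∈ J, (-w e) • x e = ∑ e ∈ I, w e • x e := by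
    have h1 : ∑ e ∈ J, (-w e) • x e = -∑ e ∈ J, w e • x e := by
      simp [neg_smul]
    rw [h1, neg_eq_iff_add_eq_zero, add_comm]
    exact hvec
  have hωJ : ∑ e ∈ J, ((-w e) / S) • x e = ω := by
    rw [hωdef, hconvsmul J (fun e => -w e), hconvsmul I w, hkey]
  -- package everything using Finset.equivFin
  refine ⟨ω, hωmem, I.card, J.card,
    (fun k => w ↑(I.equivFin.symm k) / S),
    (fun k => (-w ↑(J.equivFin.symm k)) / S),
    (fun k => x ↑(I.equivFin.symm k)),
    (fun k => x ↑(J.equivFin.symm k)),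
    ?_, ?_, ?_, ?_, ?_, ?_, ?_, ?_, ?_, ?_, ?_, ?_⟩
  · exact fun k => div_pos (hIpos _ (I.equivFin.symm k).2) hSpos
  · exact fun k => div_pos (neg_pos.mpr (hJneg _ (J.equivFin.symm k).2)) hSpos
  · rw [sum_equivFin_aux I (fun e => w e / S), ← Finset.sum_div, ← hSdef,
      div_self hSpos.ne']
  · rw [sum_equivFin_aux J (fun e => -w e / S), ← Finset.sum_div, hJsum,
      div_self hSpos.ne']
  · exact fun k => htsub (↑(I.equivFin.symm k) : t).2
  · exact fun k => htsub (↑(J.equivFin.symm k) : t).2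
  · intro a b hab
    exact I.equivFin.symm.injective (Subtype.coe_injective (hxinj hab))
  · intro a b hab
    exact J.equivFin.symm.injective (Subtype.coe_injective (hxinj hab))
  · intro i j hij
    have h1 : (↑(I.equivFin.symm i) : t) = ↑(J.equivFin.symm j) := hxinj hij
    have h2 : (↑(I.equivFin.symm i) : t) ∈ I := (I.equivFin.symm i).2
    have h3 : (↑(I.equivFin.symm i) : t) ∈ J := h1 ▸ (J.equivFin.symm j).2
    exact Finset.disjoint_left.mp hIJdisj h2 h3
  · rw [sum_equivFin_aux I (fun e => (w e / S) • x e)]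
  · rw [sum_equivFin_aux J (fun e => ((-w e) / S) • x e)]
    exact hωJ
  · calc I.card + J.card = (I ∪ J).card := (Finset.card_union_of_disjoint hIJdisj).symm
      _ ≤ s.card := Finset.card_le_card hIJsub
      _ ≤ Fintype.card t := Finset.card_le_univ s
      _ = d + 2 := hcardt
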